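/- Let u², v², w² be squares such that v² is a proper substring of u² whose occurrence starts strictly before the occurrence of the L-root interval r_{u²}, and w² is a proper substring of v² whose occurrence starts strictly before the occurrences of both r_{u²} and r_{v²}, where r_{u²} and r_{v²} are the L-root intervals of u² and v² with respect to the lexicographic order of w². If w is primitive, then |u| ≥ |v| + |w|. -/

import Mathlib

/-- `listPow x k` is the `k`-th power `xᵏ` of the string `x`. -/
def listPow {α : Type*} (x : List α) (k : ℕ) : List α := (List.replicate k x).flatten

/-- A string is primitive if it is not a proper power. -/
def IsPrimitiveWord {α : Type*} (w : List α) : Prop :=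
  ¬ ∃ (x : List α) (k : ℕ), 2 ≤ k ∧ w = listPow x k

/-- A non-empty string is a Lyndon word with respect to the lexicographic order induced
by the relation `lt` if it is lexicographically smaller than all of its non-empty
proper suffixes. -/
def IsLyndonRel {α : Type*} (lt : α → α → Prop) (w : List α) : Prop :=
  w ≠ [] ∧ ∀ s : List α, s <:+ w → s ≠ [] → s ≠ w → List.Lex lt w s

/-- `p` is a period of `w` (0-indexed): `1 ≤ p ≤ |w|` and `w[i] = w[i+p]` whenever
both are defined. -/
def IsPeriodOf {α : Type*} (w : List α) (p : ℕ) : Prop :=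
  1 ≤ p ∧ p ≤ w.length ∧ ∀ i : ℕ, i + p < w.length → w[i]? = w[i + p]?

/-- `p` is the smallest period of `w`. -/
def IsLeastPeriod {α : Type*} (w : List α) (p : ℕ) : Prop :=
  IsPeriodOf w p ∧ ∀ q : ℕ, IsPeriodOf w q → p ≤ q

/-- `seg t a b` is the substring `t[a..b)` of `t` (0-indexed, half open). -/
def seg {α : Type*} (t : List α) (a b : ℕ) : List α := (t.drop a).take (b - a)

/-- `t[i..j]` (0-indexed, inclusive) is a run with smallest period `p`: the substring
has smallest period `p` with `2p ≤ j - i + 1`, and neither the extension by one symbol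
to the left nor to the right (when they exist) has smallest period `p`. -/
def IsRun {α : Type*} (t : List α) (i j p : ℕ) : Prop :=
  i ≤ j ∧ j < t.length ∧
  IsLeastPeriod (seg t i (j + 1)) p ∧ 2 * p ≤ j + 1 - i ∧
  (i = 0 ∨ ¬ IsLeastPeriod (seg t (i - 1) (j + 1)) p) ∧
  (j + 1 = t.length ∨ ¬ IsLeastPeriod (seg t i (j + 2)) p)

section Lex
variable {α : Type*} (lt : α → α → Prop)

theorem GTS_lex_of_prefix_ne : ∀ {l₁ l₂ : List α}, l₁ <+: l₂ → l₁ ≠ l₂ → List.Lex lt l₁ l₂ := by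
  intro l₁
  induction l₁ with
  | nil => intro l₂ _ hne; cases l₂ with
    | nil => exact absurd rfl hne
    | cons b t => exact List.Lex.nil
  | cons a t ih =>
    intro l₂ hp hne
    cases l₂ with
    | nil => exact absurd (List.eq_nil_of_prefix_nil hp) (by simp)
    | cons b t₂ =>
      obtain ⟨r, hr⟩ := hp
      simp only [List.cons_append, List.cons.injEq] at hr
      obtain ⟨rfl, hr⟩ := hr
      exact List.Lex.cons (ih ⟨r, hr⟩ (fun h => hne (by rw [h])))

theorem GTS_lex_asymm (hasym : ∀ a b : α, lt a b → ¬ lt b a) :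
    ∀ {l₁ l₂ : List α}, List.Lex lt l₁ l₂ → List.Lex lt l₂ l₁ → False := by
  intro l₁ l₂ h
  induction h with
  | nil => intro h2; cases h2
  | @cons a t₁ t₂ h ih => intro h2; cases h2 with
    | cons h' => exact ih h'
    | rel h' => exact hasym _ _ h' h'
  | @rel a₁ t₁ a₂ t₂ h => intro h2; cases h2 with
    | cons h' => exact hasym _ _ h h
    | rel h' => exact hasym _ _ h h'

theorem GTS_lex_irrefl (hasym : ∀ a b : α, lt a b → ¬ lt b a) {l : List α}
    (h : List.Lex lt l l) : False := GTS_lex_asymm lt hasym h h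

theorem GTS_lex_trichotomy (htri : ∀ a b : α, lt a b ∨ a = b ∨ lt b a) :
    ∀ (l₁ l₂ : List α), List.Lex lt l₁ l₂ ∨ l₁ = l₂ ∨ List.Lex lt l₂ l₁ := by
  intro l₁
  induction l₁ with
  | nil => intro l₂; cases l₂ with
    | nil => exact Or.inr (Or.inl rfl)
    | cons b t => exact Or.inl List.Lex.nil
  | cons a t ih =>
    intro l₂; cases l₂ with
    | nil => exact Or.inr (Or.inr List.Lex.nil)
    | cons b t₂ =>
      rcases htri a b with h | rfl | h
      · exact Or.inl (List.Lex.rel h)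
      · rcases ih t₂ with h | rfl | h
        · exact Or.inl (List.Lex.cons h)
        · exact Or.inr (Or.inl rfl)
        · exact Or.inr (Or.inr (List.Lex.cons h))
      · exact Or.inr (Or.inr (List.Lex.rel h))

theorem GTS_lex_trans (htr : ∀ a b c : α, lt a b → lt b c → lt a c) :
    ∀ {l₁ l₂ l₃ : List α}, List.Lex lt l₁ l₂ → List.Lex lt l₂ l₃ → List.Lex lt l₁ l₃ := by
  intro l₁ l₂ l₃ h
  induction h generalizing l₃ with
  | nil => intro h2; cases h2 with
    | cons _ => exact List.Lex.nil
    | rel _ => exact List.Lex.nil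
  | @cons a t₁ t₂ h ih => intro h2; cases h2 with
    | cons h' => exact List.Lex.cons (ih h')
    | rel h' => exact List.Lex.rel h'
  | @rel a₁ t₁ a₂ t₂ h => intro h2; cases h2 with
    | cons h' => exact List.Lex.rel h
    | rel h' => exact List.Lex.rel (htr _ _ _ h h')

/-- first-difference extraction from Lex -/
theorem GTS_lex_fd : ∀ {l₁ l₂ : List α}, List.Lex lt l₁ l₂ →
    (l₁ <+: l₂ ∧ l₁ ≠ l₂) ∨
    ∃ m : ℕ, (∀ k < m, l₁[k]? = l₂[k]?) ∧
      ∃ a b : α, l₁[m]? = some a ∧ l₂[m]? = some b ∧ lt a b := by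
  intro l₁ l₂ h
  induction h with
  | @nil a l => exact Or.inl ⟨⟨a :: l, rfl⟩, by simp⟩
  | @cons a t₁ t₂ h ih =>
    rcases ih with ⟨hp, hne⟩ | ⟨m, hk, x, y, h1, h2, hxy⟩
    · refine Or.inl ⟨?_, fun he => hne (by injection he)⟩
      obtain ⟨r, hr⟩ := hp
      exact ⟨r, by rw [List.cons_append, hr]⟩
    · refine Or.inr ⟨m + 1, ?_, x, y, by simpa using h1, by simpa using h2, hxy⟩
      intro k hk'
      cases k with
      | zero => simp
      | succ k => simpa using hk k (by omega)
  | @rel a₁ t₁ a₂ t₂ h =>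
    refine Or.inr ⟨0, ?_, a₁, a₂, by simp, by simp, h⟩
    intro k hk
    exact absurd hk (Nat.not_lt_zero k)

/-- first-difference construction of Lex -/
theorem GTS_lex_of_fd : ∀ (m : ℕ) {l₁ l₂ : List α},
    (∀ k < m, l₁[k]? = l₂[k]?) →
    ∀ {a b}, l₁[m]? = some a → l₂[m]? = some b → lt a b → List.Lex lt l₁ l₂ := by
  intro m
  induction m with
  | zero =>
    intro l₁ l₂ _ a b h1 h2 hab
    cases l₁ with
    | nil => simp at h1
    | cons c t₁ => cases l₂ with
      | nil => simp at h2
      | cons d t₂ =>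
        simp only [List.getElem?_cons_zero, Option.some.injEq] at h1 h2
        subst h1; subst h2; exact List.Lex.rel hab
  | succ m ih =>
    intro l₁ l₂ hk a b h1 h2 hab
    cases l₁ with
    | nil => simp at h1
    | cons c t₁ => cases l₂ with
      | nil => simp at h2
      | cons d t₂ =>
        have h0 := hk 0 (by omega)
        simp only [List.getElem?_cons_zero, Option.some.injEq] at h0
        subst h0
        refine List.Lex.cons (ih ?_ (by simpa using h1) (by simpa using h2) hab)
        intro k hk'
        simpa using hk (k + 1) (by omega)

theorem GTS_lex_append_eqlen {l₁ l₂ : List α} (t₁ t₂ : List α) (hl : l₁.length = l₂.length)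
    (h : List.Lex lt l₁ l₂) : List.Lex lt (l₁ ++ t₁) (l₂ ++ t₂) := by
  induction h with
  | nil => simp at hl
  | cons h ih => exact List.Lex.cons (ih (by simpa using hl))
  | rel h => exact List.Lex.rel h

theorem GTS_exists_lex_min (hasym : ∀ a b : α, lt a b → ¬ lt b a)
    (htri : ∀ a b : α, lt a b ∨ a = b ∨ lt b a)
    (htr : ∀ a b c : α, lt a b → lt b c → lt a c) :
    ∀ (L : List (List α)), L ≠ [] → ∃ m ∈ L, ∀ x ∈ L, ¬ List.Lex lt x m := by
  intro L
  induction L with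
  | nil => intro h; exact absurd rfl h
  | cons c rest ih =>
    intro _
    rcases eq_or_ne rest [] with rfl | hne
    · refine ⟨c, by simp, ?_⟩
      intro x hx
      simp only [List.mem_singleton, List.mem_cons, List.not_mem_nil, or_false] at hx
      subst hx
      exact fun h => GTS_lex_irrefl lt hasym h
    · obtain ⟨m, hm, hmin⟩ := ih hne
      by_cases h : List.Lex lt c m
      · refine ⟨c, by simp, ?_⟩
        intro x hx
        rcases List.mem_cons.1 hx with rfl | hx
        · exact fun h' => GTS_lex_irrefl lt hasym h'
        · intro hxc
          rcases GTS_lex_trichotomy lt htri x m with h' | rfl | h'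
          · exact hmin x hx h'
          · exact GTS_lex_asymm lt hasym h hxc
          · exact GTS_lex_asymm lt hasym h (GTS_lex_trans lt htr h' hxc)
      · refine ⟨m, List.mem_cons_of_mem _ hm, ?_⟩
        intro x hx
        rcases List.mem_cons.1 hx with rfl | hx
        · exact h
        · exact hmin x hx

end Lex

section Per
variable {α : Type*}

theorem GTS_listPow_length (x : List α) (k : ℕ) : (listPow x k).length = k * x.length := by
  simp [listPow]

theorem GTS_listPow_succ (x : List α) (k : ℕ) : listPow x (k + 1) = x ++ listPow x k := by
  simp [listPow, List.replicate_succ]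

theorem GTS_getElem?_mid (X Y : List α) (Z : List α) (i : ℕ) (h : i < Y.length) :
    (X ++ (Y ++ Z))[X.length + i]? = Y[i]? := by
  rw [List.getElem?_append_right (Nat.le_add_right _ _)]
  simp only [Nat.add_sub_cancel_left]
  rw [List.getElem?_append, if_pos h]

theorem GTS_getElem?_left (X Y : List α) (i : ℕ) (h : i < X.length) :
    (X ++ Y)[i]? = X[i]? := by rw [List.getElem?_append, if_pos h]

theorem GTS_getElem?_right (X Y : List α) (i : ℕ) :
    (X ++ Y)[X.length + i]? = Y[i]? := by
  rw [List.getElem?_append_right (Nat.le_add_right _ _)]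
  simp

/-- a string whose length is a multiple of a period is a power -/
theorem GTS_period_power : ∀ (k : ℕ) (t : List α) (p : ℕ), IsPeriodOf t p →
    t.length = k * p → t = listPow (t.take p) k := by
  intro k
  induction k with
  | zero =>
    intro t p hp hl
    obtain ⟨h1, h2, _⟩ := hp
    omega
  | succ k ih =>
    intro t p hp hl
    obtain ⟨h1, h2, h3⟩ := hp
    have hl' : t.length = k * p + p := by rw [hl]; ring
    rcases Nat.eq_zero_or_pos k with rfl | hk
    · have h0 : t.length = p := by omega
      have : t.take p = t := by rw [← h0]; exact List.take_length
      rw [this]; simp [listPow]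
    · have hkp : p ≤ k * p := Nat.le_mul_of_pos_left p hk
      have hdl : (t.drop p).length = k * p := by rw [List.length_drop]; omega
      have hdper : IsPeriodOf (t.drop p) p := by
        refine ⟨h1, by omega, ?_⟩
        intro i hi
        rw [hdl] at hi
        rw [List.getElem?_drop, List.getElem?_drop]
        have := h3 (p + i) (by omega)
        rw [this]; ring_nf
      have hIH := ih (t.drop p) p hdper hdl
      have htake : (t.drop p).take p = t.take p := by
        apply List.ext_getElem?
        intro i
        rcases Nat.lt_or_ge i p with hip | hip
        · rw [List.getElem?_take, if_pos hip, List.getElem?_take, if_pos hip,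
            List.getElem?_drop]
          have := h3 i (by omega)
          rw [this]; ring_nf
        · rw [List.getElem?_take, if_neg (by omega), List.getElem?_take, if_neg (by omega)]
      calc t = t.take p ++ t.drop p := (List.take_append_drop p t).symm
        _ = t.take p ++ listPow ((t.drop p).take p) k := by rw [← hIH]
        _ = t.take p ++ listPow (t.take p) k := by rw [htake]
        _ = listPow (t.take p) (k + 1) := (GTS_listPow_succ _ _).symm

theorem GTS_period_power' (t : List α) (p : ℕ) (hp : IsPeriodOf t p) (hd : p ∣ t.length) :
    t = listPow (t.take p) (t.length / p) := by
  obtain ⟨c, hc⟩ := hd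
  have h1 : 1 ≤ p := hp.1
  have h2 : t.length / p = c := by rw [hc]; exact Nat.mul_div_cancel_left c (by omega)
  rw [h2]
  exact GTS_period_power c t p hp (by rw [hc]; ring)

/-- weak Fine–Wilf -/
theorem GTS_fine_wilf : ∀ (N : ℕ) (t : List α) (p q : ℕ), p + q ≤ N →
    IsPeriodOf t p → IsPeriodOf t q → p + q ≤ t.length → IsPeriodOf t (Nat.gcd p q) := by
  intro N
  induction N using Nat.strong_induction_on with
  | _ N ih =>
    intro t p q hN hp hq hlen
    have hp1 : 1 ≤ p := hp.1
    have hq1 : 1 ≤ q := hq.1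
    rcases Nat.lt_trichotomy p q with hpq | rfl | hpq
    · -- p < q : replace q by q - p
      have hq' : IsPeriodOf t (q - p) := by
        obtain ⟨hp1, hp2, hp3⟩ := hp
        obtain ⟨hq1, hq2, hq3⟩ := hq
        refine ⟨by omega, by omega, ?_⟩
        intro i hi
        rcases Nat.lt_or_ge i p with hip | hip
        · have e1 : t[i]? = t[i + q]? := hq3 i (by omega)
          have e2 : t[i + (q - p)]? = t[i + (q - p) + p]? := hp3 _ (by omega)
          rw [e1, e2]
          congr 1
          omega
        · have e1 : t[i - p]? = t[i - p + p]? := hp3 _ (by omega)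
          have e2 : t[i - p]? = t[i - p + q]? := hq3 _ (by omega)
          have e3 : i - p + p = i := by omega
          rw [e3] at e1
          rw [← e1, e2]
          congr 1
          omega
      have hg : Nat.gcd p (q - p) = Nat.gcd p q := by
        conv_rhs => rw [← Nat.sub_add_cancel (le_of_lt hpq)]
        exact (Nat.gcd_add_self_right p (q - p)).symm
      rw [← hg]
      exact ih (p + (q - p)) (by omega) t p (q - p) (by omega) hp hq' (by omega)
    · rw [Nat.gcd_self]; exact hp
    · -- q < p : symmetric
      rw [Nat.gcd_comm]
      have hp' : IsPeriodOf t (p - q) := by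
        obtain ⟨hp1, hp2, hp3⟩ := hp
        obtain ⟨hq1, hq2, hq3⟩ := hq
        refine ⟨by omega, by omega, ?_⟩
        intro i hi
        rcases Nat.lt_or_ge i q with hip | hip
        · have e1 : t[i]? = t[i + p]? := hp3 i (by omega)
          have e2 : t[i + (p - q)]? = t[i + (p - q) + q]? := hq3 _ (by omega)
          rw [e1, e2]
          congr 1
          omega
        · have e1 : t[i - q]? = t[i - q + q]? := hq3 _ (by omega)
          have e2 : t[i - q]? = t[i - q + p]? := hp3 _ (by omega)
          have e3 : i - q + q = i := by omega
          rw [e3] at e1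
          rw [← e1, e2]
          congr 1
          omega
      have hg : Nat.gcd q (p - q) = Nat.gcd q p := by
        conv_rhs => rw [← Nat.sub_add_cancel (le_of_lt hpq)]
        exact (Nat.gcd_add_self_right q (p - q)).symm
      rw [← hg]
      exact ih (q + (p - q)) (by omega) t q (p - q) (by omega) hq hp' (by omega)

/-- transport a period to an aligned substring -/
theorem GTS_period_sub (s t : List α) (off p : ℕ) (hs : IsPeriodOf s p)
    (ht : ∀ i < t.length, t[i]? = s[off + i]?) (hp : p ≤ t.length)
    (hoff : off + t.length ≤ s.length) : IsPeriodOf t p := by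
  obtain ⟨h1, h2, h3⟩ := hs
  refine ⟨h1, hp, ?_⟩
  intro i hi
  rw [ht i (by omega), ht (i + p) hi]
  have := h3 (off + i) (by omega)
  rw [this]
  congr 1
  omega

/-- a cyclic rotation of a word with period g dividing the length also has period g -/
theorem GTS_period_rotate (X Y : List α) (g : ℕ) (hp : IsPeriodOf (X ++ Y) g)
    (hd : g ∣ (X ++ Y).length) : IsPeriodOf (Y ++ X) g := by
  obtain ⟨h1, h2, h3⟩ := hp
  set n := (X ++ Y).length with hn
  have hng : 0 < n := by omega
  -- K : reduce indices mod g
  have K : ∀ a : ℕ, a < n → (X ++ Y)[a]? = (X ++ Y)[a % g]? := by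
    intro a
    induction a using Nat.strong_induction_on with
    | _ a ihK =>
      intro ha
      rcases Nat.lt_or_ge a g with h | h
      · rw [Nat.mod_eq_of_lt h]
      · have e1 : (X ++ Y)[a - g]? = (X ++ Y)[a - g + g]? := h3 _ (by omega)
        have e2 : a - g + g = a := by omega
        rw [e2] at e1
        rw [← e1, ihK (a - g) (by omega) (by omega)]
        congr 1
        conv_rhs => rw [← e2]
        rw [Nat.add_mod_right]
  have J : ∀ j : ℕ, j < n → (Y ++ X)[j]? = (X ++ Y)[(X.length + j) % n]? := by
    intro j hj
    have hnl : n = X.length + Y.length := by simp [hn]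
    rcases Nat.lt_or_ge j Y.length with h | h
    · rw [GTS_getElem?_left Y X j h, Nat.mod_eq_of_lt (by omega)]
      have := GTS_getElem?_right X Y j
      rw [this]
    · rw [List.getElem?_append_right h]
      have hmod : (X.length + j) % n = j - Y.length := by
        have : X.length + j = n + (j - Y.length) := by omega
        rw [this, Nat.add_mod_left, Nat.mod_eq_of_lt (by omega)]
      rw [hmod, GTS_getElem?_left X Y _ (by omega)]
  refine ⟨h1, by simp [hn] at h2 ⊢; omega, ?_⟩
  intro i hi
  have hlen : (Y ++ X).length = n := by simp [hn]; omega
  rw [hlen] at hi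
  rw [J i (by omega), J (i + g) hi]
  rw [K _ (Nat.mod_lt _ hng), K _ (Nat.mod_lt _ hng)]
  congr 1
  rw [Nat.mod_mod_of_dvd _ hd, Nat.mod_mod_of_dvd _ hd]
  conv_rhs => rw [← Nat.add_assoc, Nat.add_mod_right]

end Per

section Rot
variable {α : Type*} (lt : α → α → Prop)

/-- a primitive word is not a power via a period dividing the length -/
theorem GTS_not_period_dvd (w : List α) (hprim : IsPrimitiveWord w) (g : ℕ)
    (hper : IsPeriodOf w g) (hdvd : g ∣ w.length) (hlt : g < w.length) : False := by
  apply hprim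
  refine ⟨w.take g, w.length / g, ?_, GTS_period_power' w g hper hdvd⟩
  have hg1 : 1 ≤ g := hper.1
  obtain ⟨c, hc⟩ := hdvd
  have : w.length / g = c := by rw [hc]; exact Nat.mul_div_cancel_left c (by omega)
  rw [this]
  rcases Nat.lt_or_ge c 2 with h | h
  · interval_cases c <;> omega
  · exact h

/-- two halves that commute give a period -/
theorem GTS_period_of_comm (X Y : List α) (hX : X ≠ []) (hY : Y ≠ [])
    (h : X ++ Y = Y ++ X) : IsPeriodOf (X ++ Y) X.length := by
  have hX1 : 1 ≤ X.length := by
    cases X with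
    | nil => exact absurd rfl hX
    | cons a t => simp
  refine ⟨hX1, by simp, ?_⟩
  intro i hi
  simp only [List.length_append] at hi
  have hiY : i < Y.length := by omega
  have e1 : (X ++ Y)[X.length + i]? = Y[i]? := GTS_getElem?_right X Y i
  have e2 : (X ++ Y)[i]? = Y[i]? := by
    rw [h]; exact GTS_getElem?_left Y X i hiY
  rw [e2, ← e1]
  congr 1
  omega

theorem GTS_exists_lyndon_rotation
    (hasym : ∀ a b : α, lt a b → ¬ lt b a)
    (htri : ∀ a b : α, lt a b ∨ a = b ∨ lt b a)
    (htr : ∀ a b c : α, lt a b → lt b c → lt a c)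
    (w : List α) (hwne : w ≠ []) (hprim : IsPrimitiveWord w) :
    ∃ r < w.length, IsLyndonRel lt (w.rotate r) := by
  set W := w.length with hW
  have hW1 : 1 ≤ W := by
    cases w with
    | nil => exact absurd rfl hwne
    | cons a t => simp [hW]
  set L : List (List α) := (List.range W).map (fun r => w.rotate r) with hL
  have hLne : L ≠ [] := by
    simp [hL]
    omega
  obtain ⟨m, hmL, hmin⟩ := GTS_exists_lex_min lt hasym htri htr L hLne
  simp only [hL, List.mem_map, List.mem_range] at hmL
  obtain ⟨r, hr, hrm⟩ := hmL
  -- membership of rotations of m in L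
  have hrotmem : ∀ k : ℕ, ∀ x : List α, x = m.rotate k → ¬ List.Lex lt x m := by
    intro k x hx
    apply hmin
    rw [hx, ← hrm, List.rotate_rotate]
    simp only [hL, List.mem_map, List.mem_range]
    exact ⟨(r + k) % W, Nat.mod_lt _ (by omega), List.rotate_mod w (r + k)⟩
  have hmlen : m.length = W := by rw [← hrm]; simp [hW]
  refine ⟨r, hr, ?_⟩
  rw [hrm]
  constructor
  · intro h
    rw [h] at hmlen
    simp at hmlen
    omega
  intro σ hsuf hσne hσm
  -- show Lex m σ
  rcases GTS_lex_trichotomy lt htri m σ with h | h | h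
  · exact h
  · exact absurd h.symm hσm
  exfalso
  -- σ is a proper suffix : m = x ++ σ
  obtain ⟨x, hx⟩ := hsuf
  have hσlen : σ.length < W := by
    have h1 : σ.length ≤ m.length := by rw [← hx]; simp
    have h2 : σ.length ≠ m.length := by
      intro he
      apply hσm
      have := congrArg List.length hx
      simp at this
      have hx0 : x.length = 0 := by omega
      have : x = [] := List.eq_nil_of_length_eq_zero hx0
      rw [this] at hx
      simpa using hx
    omega
  have hσ1 : 1 ≤ σ.length := by
    cases σ with
    | nil => exact absurd rfl hσne
    | cons a t => simp
  have hxlen : x.length = W - σ.length := by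
    have := congrArg List.length hx
    simp at this
    omega
  rcases GTS_lex_fd lt h with ⟨hpre, hprne⟩ | ⟨k, hk, a, b, h1, h2, hab⟩
  · -- border case : σ is a prefix of m too
    set z := m.drop σ.length with hz
    have hmz : m = σ ++ z := by
      have := List.prefix_iff_eq_take.mp hpre
      conv_lhs => rw [← List.take_append_drop σ.length m]
      rw [← this, hz]
    have hzlen : z.length = W - σ.length := by
      simp [hz]; omega
    -- rotation (z ++ σ) of m
    have hrot1 : m.rotate σ.length = z ++ σ := by
      rw [List.rotate_eq_drop_append_take (by omega), ← hz]
      congr 1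
      exact (List.prefix_iff_eq_take.mp hpre).symm
    -- rotation (σ ++ x) of m
    have hrot2 : m.rotate x.length = σ ++ x := by
      rw [List.rotate_eq_drop_append_take (by omega)]
      congr 1
      · rw [← hx]; exact List.drop_left
      · rw [← hx]; exact List.take_left
    -- minimality vs  σ ++ x : ¬ Lex (σ++x) (σ++z)
    have hmin2 : ¬ List.Lex lt (σ ++ x) (σ ++ z) := by
      rw [← hmz]
      exact hrotmem x.length _ hrot2.symm
    have hxz : ¬ List.Lex lt x z := fun hh => hmin2 (List.Lex.append_left lt hh σ)
    rcases GTS_lex_trichotomy lt htri x z with hh | hh | hh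
    · exact hxz hh
    · -- x = z : m = σ ++ z = z ++ σ, commute
      subst hh
      have hzne : z ≠ [] := by
        intro h0
        rw [h0] at hzlen
        simp at hzlen
        omega
      have hcomm : σ ++ z = z ++ σ := by rw [← hmz]; exact hx.symm
      have hper : IsPeriodOf (σ ++ z) σ.length :=
        GTS_period_of_comm σ z hσne hzne hcomm
      have hperm : IsPeriodOf m σ.length := by rw [hmz]; exact hper
      have hper2 : IsPeriodOf (z ++ σ) z.length :=
        GTS_period_of_comm z σ hzne hσne hcomm.symm
      have hperm2 : IsPeriodOf m z.length := by rw [← hx]; exact hper2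
      -- Fine-Wilf: gcd is a period of m
      have hsum : σ.length + z.length ≤ m.length := by omega
      have hgcd : IsPeriodOf m (Nat.gcd σ.length z.length) :=
        GTS_fine_wilf (σ.length + z.length) m σ.length z.length le_rfl hperm hperm2 hsum
      set g := Nat.gcd σ.length z.length with hg
      have hgdvd : g ∣ W := by
        have d1 : g ∣ σ.length := Nat.gcd_dvd_left _ _
        have d2 : g ∣ z.length := Nat.gcd_dvd_right _ _
        have hWsum : σ.length + z.length = W := by omega
        rw [← hWsum]
        exact Nat.dvd_add d1 d2
      have hglt : g < W := by
        have : g ≤ σ.length := Nat.gcd_le_left _ (by omega)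
        omega
      -- transport period g from m back to w
      have hwrot : m = w.drop r ++ w.take r := by
        rw [← hrm]
        exact List.rotate_eq_drop_append_take (by omega)
      have hwper : IsPeriodOf w g := by
        have h1 : IsPeriodOf (w.drop r ++ w.take r) g := by rw [← hwrot]; exact hgcd
        have h2 : g ∣ (w.drop r ++ w.take r).length := by
          rw [← hwrot, hmlen]; exact hgdvd
        have := GTS_period_rotate (w.drop r) (w.take r) g h1 h2
        rw [List.take_append_drop] at this
        exact this
      exact GTS_not_period_dvd w hprim g hwper hgdvd (by omega)
    · -- Lex z x : rotation z ++ σ is smaller than m = x ++ σ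
      have : List.Lex lt (z ++ σ) (x ++ σ) :=
        GTS_lex_append_eqlen lt σ σ (by omega) hh
      rw [hx] at this
      exact hrotmem σ.length _ hrot1.symm this
  · -- genuine first difference : rotation σ ++ x is smaller than m
    have hkσ : k < σ.length := by
      by_contra hcon
      push_neg at hcon
      rw [List.getElem?_eq_none hcon] at h1
      exact Option.some_ne_none _ h1.symm
    have hlex2 : List.Lex lt (σ ++ x) m := by
      refine GTS_lex_of_fd lt k ?_ ?_ h2 hab
      · intro k' hk'
        rw [GTS_getElem?_left σ x k' (by omega)]
        exact hk k' hk'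
      · rw [GTS_getElem?_left σ x k hkσ]
        exact h1
    have hrot2 : m.rotate x.length = σ ++ x := by
      rw [List.rotate_eq_drop_append_take (by rw [hmlen]; omega)]
      congr 1
      · rw [← hx]; exact List.drop_left
      · rw [← hx]; exact List.take_left
    exact hrotmem x.length _ hrot2.symm hlex2
end Rot

section SLt
variable {α : Type*} (lt : α → α → Prop)

/-- the suffix of `s` at `x` is lexicographically smaller than the one at `y` -/
def GTS_SLt (s : List α) (x y : ℕ) : Prop :=
  ∃ m : ℕ, (∀ k < m, s[x + k]? = s[y + k]?) ∧
    ((s[x + m]? = none ∧ s[y + m]? ≠ none) ∨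
     ∃ a b : α, s[x + m]? = some a ∧ s[y + m]? = some b ∧ lt a b)

theorem GTS_slt_asymm (hirr : ∀ a : α, ¬ lt a a) (hasym : ∀ a b : α, lt a b → ¬ lt b a)
    (s : List α) (x y : ℕ) (h1 : GTS_SLt lt s x y) (h2 : GTS_SLt lt s y x) : False := by
  obtain ⟨m1, hk1, hc1⟩ := h1
  obtain ⟨m2, hk2, hc2⟩ := h2
  rcases Nat.lt_trichotomy m1 m2 with h | rfl | h
  · have he : s[y + m1]? = s[x + m1]? := hk2 m1 h
    rcases hc1 with ⟨hn, hsome⟩ | ⟨a, b, ha, hb, hab⟩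
    · exact hsome (he.trans hn)
    · rw [ha, hb] at he
      injection he with he
      subst he
      exact hirr _ hab
  · rcases hc1 with ⟨hn1, hs1⟩ | ⟨a, b, ha, hb, hab⟩
    · rcases hc2 with ⟨hn2, hs2⟩ | ⟨a, b, ha, hb, hab⟩
      · exact hs2 hn1
      · rw [hn1] at hb; exact Option.some_ne_none _ hb.symm
    · rcases hc2 with ⟨hn2, hs2⟩ | ⟨a', b', ha', hb', hab'⟩
      · rw [hn2] at hb; exact Option.some_ne_none _ hb.symm
      · rw [ha] at hb'; rw [hb] at ha'
        injection hb' with e1; injection ha' with e2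
        subst e1; subst e2
        exact hasym _ _ hab hab'
  · have he : s[x + m2]? = s[y + m2]? := hk1 m2 h
    rcases hc2 with ⟨hn, hsome⟩ | ⟨a, b, ha, hb, hab⟩
    · exact hsome (he.trans hn)
    · rw [hb, ha] at he
      injection he with he
      subst he
      exact hirr _ hab

/-- one-liner: a Lyndon window makes its start smaller than interior positions -/
theorem GTS_slt_window (s : List α) (z e y : ℕ) (lam : List α)
    (hwin : ∀ k < e, s[z + k]? = lam[k]?) (hlen : lam.length = e)
    (hly : IsLyndonRel lt lam) (hzy : z < y) (hye : y < z + e) :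
    GTS_SLt lt s z y := by
  set d := y - z with hd
  have hd1 : 1 ≤ d := by omega
  have hde : d < e := by omega
  set σ := lam.drop d with hσ
  have hσlen : σ.length = e - d := by simp [hσ, hlen]
  have hlex : List.Lex lt lam σ := by
    refine hly.2 σ (List.drop_suffix d lam) ?_ ?_
    · intro h0; rw [h0] at hσlen; simp at hσlen; omega
    · intro h0
      have := congrArg List.length h0
      rw [hσlen, hlen] at this
      omega
  rcases GTS_lex_fd lt hlex with ⟨hp, _⟩ | ⟨m, hk, a, b, h1, h2, hab⟩
  · have := hp.length_le; rw [hσlen, hlen] at this; omega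
  · have hmσ : m < σ.length := by
      by_contra hcon
      push_neg at hcon
      rw [List.getElem?_eq_none hcon] at h2
      exact Option.some_ne_none _ h2.symm
    rw [hσlen] at hmσ
    refine ⟨m, ?_, Or.inr ⟨a, b, ?_, ?_, hab⟩⟩
    · intro k hkm
      have e1 : s[z + k]? = lam[k]? := hwin k (by omega)
      have e2 : s[y + k]? = lam[d + k]? := by
        rw [show y + k = z + (d + k) by omega]
        exact hwin (d + k) (by omega)
      have e3 : σ[k]? = lam[d + k]? := by rw [hσ, List.getElem?_drop]
      rw [e1, e2, ← e3, ← hk k hkm]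
    · rw [show z + m = z + m from rfl]
      rw [hwin m (by omega)]; exact h1
    · rw [show y + m = z + (d + m) by omega, hwin (d + m) (by omega)]
      rw [show lam[d+m]? = σ[m]? by rw [hσ, List.getElem?_drop]]
      exact h2

/-- sigma argument: position shortly before a Lyndon window, matching its suffix -/
theorem GTS_slt_sigma (s : List α) (q e g : ℕ) (lam : List α)
    (hwin : ∀ k < e, s[q + k]? = lam[k]?) (hlen : lam.length = e)
    (hly : IsLyndonRel lt lam) (hgq : g < q) (hd : q - g < e)
    (hper : ∀ m < q - g, s[g + m]? = s[g + e + m]?) :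
    GTS_SLt lt s q g := by
  set d := q - g with hdd
  have hd1 : 1 ≤ d := by omega
  set σ := lam.drop (e - d) with hσ
  have hσlen : σ.length = d := by simp [hσ, hlen]; omega
  have hlex : List.Lex lt lam σ := by
    refine hly.2 σ (List.drop_suffix _ lam) ?_ ?_
    · intro h0; rw [h0] at hσlen; simp at hσlen; omega
    · intro h0
      have := congrArg List.length h0
      rw [hσlen, hlen] at this
      omega
  rcases GTS_lex_fd lt hlex with ⟨hp, _⟩ | ⟨m, hk, a, b, h1, h2, hab⟩
  · have := hp.length_le; rw [hσlen, hlen] at this; omega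
  · have hmσ : m < d := by
      by_contra hcon
      push_neg at hcon
      rw [List.getElem?_eq_none (by omega)] at h2
      exact Option.some_ne_none _ h2.symm
    have hgσ : ∀ k < d, s[g + k]? = σ[k]? := by
      intro k hkd
      have e1 : s[g + k]? = s[g + e + k]? := by
        rw [← hper k hkd]
      have e2 : s[g + e + k]? = lam[(e - d) + k]? := by
        rw [show g + e + k = q + ((e - d) + k) by omega]
        exact hwin ((e - d) + k) (by omega)
      rw [e1, e2, hσ, List.getElem?_drop]
    refine ⟨m, ?_, Or.inr ⟨a, b, ?_, ?_, hab⟩⟩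
    · intro k hkm
      rw [hwin k (by omega), hgσ k (by omega), ← hk k hkm]
    · rw [hwin m (by omega)]; exact h1
    · rw [hgσ m hmσ]; exact h2

/-- positions before the L-root interval are lexicographically larger than its start -/
theorem GTS_slt_decomp (s : List α) (o : ℕ) (X Lam : List α)
    (hX : ∀ k < X.length, s[o + k]? = X[k]?)
    (hLam : ∀ k < Lam.length, s[o + X.length + k]? = Lam[k]?)
    (hsuf : X <:+ Lam) (hne : X ≠ Lam) (hly : IsLyndonRel lt Lam)
    (x : ℕ) (hx1 : o ≤ x) (hx2 : x < o + X.length) :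
    GTS_SLt lt s (o + X.length) x := by
  have hXLam : X.length < Lam.length :=
    lt_of_le_of_ne hsuf.length_le (fun h => hne (hsuf.eq_of_length h))
  set σ := X.drop (x - o) with hσ
  have hσlen : σ.length = X.length - (x - o) := by simp [hσ]
  have hσsuf : σ <:+ Lam := (List.drop_suffix _ X).trans hsuf
  have hlex : List.Lex lt Lam σ := by
    refine hly.2 σ hσsuf ?_ ?_
    · intro h0; rw [h0] at hσlen; simp at hσlen; omega
    · intro h0
      have := congrArg List.length h0
      rw [hσlen] at this
      omega
  rcases GTS_lex_fd lt hlex with ⟨hp, _⟩ | ⟨m, hk, a, b, h1, h2, hab⟩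
  · have := hp.length_le; rw [hσlen] at this; omega
  · have hmσ : m < σ.length := by
      by_contra hcon
      push_neg at hcon
      rw [List.getElem?_eq_none hcon] at h2
      exact Option.some_ne_none _ h2.symm
    rw [hσlen] at hmσ
    have hxσ : ∀ k, k < X.length - (x - o) → s[x + k]? = σ[k]? := by
      intro k hkd
      rw [show x + k = o + ((x - o) + k) by omega, hX ((x - o) + k) (by omega),
        hσ, List.getElem?_drop]
    refine ⟨m, ?_, Or.inr ⟨a, b, ?_, ?_, hab⟩⟩
    · intro k hkm
      rw [hLam k (by omega), hxσ k (by omega), ← hk k hkm]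
    · rw [hLam m (by omega)]; exact h1
    · rw [hxσ m hmσ]; exact h2

end SLt

/-- Generalized three squares lemma.  Let `u²`, `v²`, `w²` be squares with `w`
primitive, where `v² ` is a proper substring of `u²` (via `u² = A · v² · B`)
starting strictly before the L-root interval `r_{u²} = λᵤ^kᵤ` of `u²`, and `w²` is a
proper substring of `v²` (via `v² = C · w² · D`) starting strictly before both
`r_{u²}` and `r_{v²} = λᵥ^kᵥ`.  Here the L-root intervals are taken with respect to
the lexicographic order `lt` of `w²`, i.e. `lt` is one of the two lexicographic
orders and, for the run `(u²)[i..j]` with the same smallest period `pw` containing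
the occurrence of `w²`, we have `(u²)[j+1] lt (u²)[j+1-pw]` whenever position `j+1`
exists.  Then `|u| ≥ |v| + |w|`. -/
theorem generalized_three_squares {α : Type*} [LinearOrder α]
    (lt : α → α → Prop)
    (hlt : lt = (fun a b : α => a < b) ∨ lt = (fun a b : α => b < a))
    (u v w : List α) (hune : u ≠ []) (hvne : v ≠ []) (hwne : w ≠ [])
    (A B : List α) (hvin : u ++ u = A ++ (v ++ v) ++ B) (hvproper : v ++ v ≠ u ++ u)
    (C D : List α) (hwin : v ++ v = C ++ (w ++ w) ++ D) (hwproper : w ++ w ≠ v ++ v)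
    (pu pv pw : ℕ)
    (hpu : IsLeastPeriod (u ++ u) pu) (hpv : IsLeastPeriod (v ++ v) pv)
    (hpw : IsLeastPeriod (w ++ w) pw)
    (i j : ℕ) (hrun : IsRun (u ++ u) i j pw)
    (hri : i ≤ A.length + C.length)
    (hrj : A.length + C.length + (w ++ w).length ≤ j + 1)
    (hord : ∀ a b : α, (u ++ u)[j + 1]? = some a → (u ++ u)[j + 1 - pw]? = some b →
      lt a b)
    (lu lv xu yu xv yv : List α) (ku kv : ℕ)
    (hluL : IsLyndonRel lt lu) (hlul : lu.length = pu)
    (hlvL : IsLyndonRel lt lv) (hlvl : lv.length = pv)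
    (hxu : xu <:+ lu) (hxune : xu ≠ lu) (hyu : yu <+: lu) (hyune : yu ≠ lu)
    (hxv : xv <:+ lv) (hxvne : xv ≠ lv) (hyv : yv <+: lv) (hyvne : yv ≠ lv)
    (hdu : u ++ u = xu ++ listPow lu ku ++ yu)
    (hdv : v ++ v = xv ++ listPow lv kv ++ yv)
    (hv_before : A.length < xu.length)
    (hw_before_u : A.length + C.length < xu.length)
    (hw_before_v : C.length < xv.length)
    (hwprim : IsPrimitiveWord w) :
    v.length + w.length ≤ u.length := by
  -- properties of lt
  have hirr : ∀ a : α, ¬ lt a a := by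
    rcases hlt with rfl | rfl <;> exact fun a => lt_irrefl a
  have hasym : ∀ a b : α, lt a b → ¬ lt b a := by
    rcases hlt with rfl | rfl <;> exact fun a b h h' => absurd h' (not_lt_of_gt h)
  have htri : ∀ a b : α, lt a b ∨ a = b ∨ lt b a := by
    rcases hlt with rfl | rfl
    · exact fun a b => lt_trichotomy a b
    · intro a b
      rcases lt_trichotomy a b with h | h | h
      · exact Or.inr (Or.inr h)
      · exact Or.inr (Or.inl h)
      · exact Or.inl h
  have htr : ∀ a b c : α, lt a b → lt b c → lt a c := by
    rcases hlt with rfl | rfl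
    · exact fun a b c h1 h2 => lt_trans h1 h2
    · exact fun a b c h1 h2 => lt_trans h2 h1
  set s : List α := u ++ u with hs
  set U := u.length with hU
  set V := v.length with hV
  set W := w.length with hW
  set a := A.length with ha
  set c := C.length with hc
  set t := a + c with ht
  have hU1 : 1 ≤ U := List.length_pos_iff.mpr hune
  have hV1 : 1 ≤ V := List.length_pos_iff.mpr hvne
  have hW1 : 1 ≤ W := List.length_pos_iff.mpr hwne
  have hslen : s.length = 2 * U := by simp [hs]; omega
  have hvvlen : (v ++ v).length = 2 * V := by simp; omega
  have hwwlen : (w ++ w).length = 2 * W := by simp; omega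
  have hlenv : 2 * U = a + 2 * V + B.length := by
    have h0 := congrArg List.length hvin
    simp only [List.length_append] at h0
    omega
  have hlenw : 2 * V = c + 2 * W + D.length := by
    have h0 := congrArg List.length hwin
    simp only [List.length_append] at h0
    omega
  have hVU : V < U := by
    rcases Nat.lt_or_ge V U with h | h
    · exact h
    · exfalso
      have hB : B.length = 0 := by omega
      have hA : a = 0 := by omega
      apply hvproper
      have : A = [] := List.eq_nil_of_length_eq_zero hA
      rw [this] at hvin
      have : B = [] := List.eq_nil_of_length_eq_zero hB
      rw [this] at hvin
      simpa using hvin.symm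
  have hWV : W < V := by
    rcases Nat.lt_or_ge W V with h | h
    · exact h
    · exfalso
      have hD : D.length = 0 := by omega
      have hC : c = 0 := by omega
      apply hwproper
      have : C = [] := List.eq_nil_of_length_eq_zero hC
      rw [this] at hwin
      have : D = [] := List.eq_nil_of_length_eq_zero hD
      rw [this] at hwin
      simpa using hwin.symm
  -- character transports
  have hsv : ∀ k < 2 * V, s[a + k]? = (v ++ v)[k]? := by
    intro k hk
    rw [ha, hvin, List.append_assoc, GTS_getElem?_right A ((v ++ v) ++ B) k]
    exact GTS_getElem?_left (v ++ v) B k (by omega)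
  have hsw : ∀ k < 2 * W, s[t + k]? = (w ++ w)[k]? := by
    intro k hk
    rw [show t + k = a + (c + k) by omega, hsv (c + k) (by omega), hwin, hc,
      List.append_assoc, GTS_getElem?_right C ((w ++ w) ++ D) k]
    exact GTS_getElem?_left (w ++ w) D k (by omega)
  -- u-period and v-period of the squares
  have hsU : IsPeriodOf s U := by
    refine ⟨hU1, by omega, ?_⟩
    intro k hk
    rw [hslen] at hk
    rw [hs, GTS_getElem?_left u u k (by omega), show k + U = u.length + k by omega,
      GTS_getElem?_right u u k]
  have hvvV : IsPeriodOf (v ++ v) V := by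
    refine ⟨hV1, by omega, ?_⟩
    intro k hk
    rw [hvvlen] at hk
    rw [GTS_getElem?_left v v k (by omega), show k + V = v.length + k by omega,
      GTS_getElem?_right v v k]
  have hwwW : IsPeriodOf (w ++ w) W := by
    refine ⟨hW1, by omega, ?_⟩
    intro k hk
    rw [hwwlen] at hk
    rw [GTS_getElem?_left w w k (by omega), show k + W = w.length + k by omega,
      GTS_getElem?_right w w k]
  have hpuU : pu ≤ U := hpu.2 U hsU
  have hpvV : pv ≤ V := hpv.2 V hvvV
  have hpw1 : 1 ≤ pw := hpw.1.1
  -- pw = W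
  have hpwW : pw = W := by
    have hle : pw ≤ W := hpw.2 W hwwW
    rcases eq_or_lt_of_le hle with h | h
    · exact h
    exfalso
    have hgcd : IsPeriodOf (w ++ w) (Nat.gcd pw W) :=
      GTS_fine_wilf (pw + W) (w ++ w) pw W le_rfl hpw.1 hwwW (by omega)
    have h1 : pw ≤ Nat.gcd pw W := hpw.2 _ hgcd
    have h2 : Nat.gcd pw W ≤ pw := Nat.gcd_le_left _ (by omega)
    have hdvd : pw ∣ W := by
      have : Nat.gcd pw W = pw := by omega
      rw [← this]
      exact Nat.gcd_dvd_right _ _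
    have hwper : IsPeriodOf w pw := by
      refine ⟨hpw1, by omega, ?_⟩
      intro k hk
      have e1 : w[k]? = (w ++ w)[k]? := (GTS_getElem?_left w w k (by omega)).symm
      have e2 : (w ++ w)[k]? = (w ++ w)[k + pw]? := hpw.1.2.2 k (by omega)
      have e3 : (w ++ w)[k + pw]? = w[k + pw]? := GTS_getElem?_left w w _ (by omega)
      rw [e1, e2, e3]
    exact GTS_not_period_dvd w hwprim pw hwper hdvd h
  subst hpwW
  -- W ≤ pu and W ≤ pv
  have hWpu : W ≤ pu := by
    rcases Nat.lt_or_ge (2 * W) pu with h | h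
    · omega
    · have : IsPeriodOf (w ++ w) pu := by
        refine GTS_period_sub s (w ++ w) t pu hpu.1 ?_ (by omega) (by omega)
        intro k hk
        rw [hwwlen] at hk
        exact (hsw k hk).symm
      exact hpw.2 pu this
  have hWpv : W ≤ pv := by
    rcases Nat.lt_or_ge (2 * W) pv with h | h
    · omega
    · have : IsPeriodOf (w ++ w) pv := by
        refine GTS_period_sub (v ++ v) (w ++ w) c pv hpv.1 ?_ (by omega) (by omega)
        intro k hk
        rw [hwwlen] at hk
        rw [hwin, hc, List.append_assoc]
        exact ((GTS_getElem?_right C ((w ++ w) ++ D) k).trans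
          (GTS_getElem?_left (w ++ w) D k (by omega))).symm
      exact hpw.2 pv this
  -- decomposition lengths
  have hgu : xu.length < pu := by
    have h1 := hxu.length_le
    rcases eq_or_lt_of_le h1 with h | h
    · exact absurd (hxu.eq_of_length (by omega)) hxune
    · omega
  have hyulen : yu.length < pu := by
    have h1 := hyu.length_le
    rcases eq_or_lt_of_le h1 with h | h
    · exact absurd (hyu.eq_of_length (by omega)) hyune
    · omega
  have hxvlen : xv.length < pv := by
    have h1 := hxv.length_le
    rcases eq_or_lt_of_le h1 with h | h
    · exact absurd (hxv.eq_of_length (by omega)) hxvne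
    · omega
  have hyvlen : yv.length < pv := by
    have h1 := hyv.length_le
    rcases eq_or_lt_of_le h1 with h | h
    · exact absurd (hyv.eq_of_length (by omega)) hyvne
    · omega
  have hdulen : 2 * U = xu.length + ku * pu + yu.length := by
    have h0 := congrArg List.length hdu
    simp only [List.length_append, GTS_listPow_length, hlul] at h0
    omega
  have hdvlen : 2 * V = xv.length + kv * pv + yv.length := by
    have h0 := congrArg List.length hdv
    simp only [List.length_append, GTS_listPow_length, hlvl] at h0
    omega
  have hku1 : 1 ≤ ku := by
    rcases Nat.eq_zero_or_pos ku with h | h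
    · exfalso; rw [h] at hdulen; simp at hdulen; omega
    · exact h
  have hkv1 : 1 ≤ kv := by
    rcases Nat.eq_zero_or_pos kv with h | h
    · exfalso; rw [h] at hdvlen; simp at hdvlen; omega
    · exact h
  -- windows
  have hwinu : ∀ k < pu, s[xu.length + k]? = lu[k]? := by
    intro k hk
    obtain ⟨ku', rfl⟩ : ∃ m, ku = m + 1 := ⟨ku - 1, by omega⟩
    rw [hdu, List.append_assoc, GTS_getElem?_right xu (listPow lu (ku' + 1) ++ yu) k,
      GTS_listPow_succ, List.append_assoc]
    exact GTS_getElem?_left lu _ k (by omega)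
  have hwinv : ∀ k < pv, s[a + xv.length + k]? = lv[k]? := by
    intro k hk
    rw [show a + xv.length + k = a + (xv.length + k) by omega,
      hsv (xv.length + k) (by omega), hdv, List.append_assoc,
      GTS_getElem?_right xv (listPow lv kv ++ yv) k]
    obtain ⟨kv', rfl⟩ : ∃ m, kv = m + 1 := ⟨kv - 1, by omega⟩
    rw [GTS_listPow_succ, List.append_assoc]
    exact GTS_getElem?_left lv _ k (by omega)
  have hXu : ∀ k < xu.length, s[0 + k]? = xu[k]? := by
    intro k hk
    rw [Nat.zero_add, hdu, List.append_assoc]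
    exact GTS_getElem?_left xu _ k hk
  have hXv : ∀ k < xv.length, s[a + k]? = xv[k]? := by
    intro k hk
    rw [hsv k (by omega), hdv, List.append_assoc]
    exact GTS_getElem?_left xv _ k hk
  -- run facts
  obtain ⟨hij, hjn, hseg, h2p, hbl, hbr⟩ := hrun
  have hseglen : (seg s i (j + 1)).length = j + 1 - i := by
    simp [seg]
    omega
  have hsegget : ∀ k < j + 1 - i, (seg s i (j + 1))[k]? = s[i + k]? := by
    intro k hk
    show ((s.drop i).take (j + 1 - i))[k]? = s[i + k]?
    rw [List.getElem?_take, if_pos hk, List.getElem?_drop]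
  have hrunper : ∀ x, i ≤ x → x + W < j + 1 → s[x]? = s[x + W]? := by
    intro x h1 h2
    have h0 := hseg.1.2.2 (x - i) (by rw [hseglen]; omega)
    rw [hsegget (x - i) (by omega), hsegget (x - i + W) (by omega)] at h0
    rw [show i + (x - i) = x by omega, show i + (x - i + W) = x + W by omega] at h0
    exact h0
  -- periodicity inside the w-square
  have hperW : ∀ x, t ≤ x → x + W < t + 2 * W → s[x]? = s[x + W]? := by
    intro x h1 h2
    have e1 := hsw (x - t) (by omega)
    rw [show t + (x - t) = x by omega] at e1
    have e2 := hsw (x - t + W) (by omega)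
    rw [show t + (x - t + W) = x + W by omega] at e2
    have e3 : (w ++ w)[x - t]? = w[x - t]? := GTS_getElem?_left w w _ (by omega)
    have e4 : (w ++ w)[x - t + W]? = w[x - t]? := by
      rw [show x - t + W = w.length + (x - t) by omega]
      exact GTS_getElem?_right w w _
    exact e1.trans (e3.trans (e4.symm.trans e2.symm))
  -- Fact C: within the run, shifting by W decreases suffixes
  have hqC : ∀ y, i ≤ y → y + W ≤ j + 1 → GTS_SLt lt s (y + W) y := by
    intro y h1 h2
    refine ⟨j + 1 - W - y, ?_, ?_⟩
    · intro k hk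
      have h0 := hrunper (y + k) (by omega) (by omega)
      rw [show y + W + k = y + k + W by omega]
      exact h0.symm
    · rcases eq_or_lt_of_le (show j + 1 ≤ s.length by omega) with he | hlt2
      · refine Or.inl ⟨?_, ?_⟩
        · rw [show y + W + (j + 1 - W - y) = j + 1 by omega]
          exact List.getElem?_eq_none (by omega)
        · rw [show y + (j + 1 - W - y) = j + 1 - W by omega]
          have hj2 : j + 1 - W < s.length := by omega
          rw [List.getElem?_eq_getElem hj2]
          simp
      · have hj1 : j + 1 < s.length := hlt2
        have hj2 : j + 1 - W < s.length := by omega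
        refine Or.inr ⟨s[j + 1]'hj1, s[j + 1 - W]'hj2, ?_, ?_,
          hord _ _ (List.getElem?_eq_getElem hj1) (List.getElem?_eq_getElem hj2)⟩
        · rw [show y + W + (j + 1 - W - y) = j + 1 by omega]
          exact List.getElem?_eq_getElem hj1
        · rw [show y + (j + 1 - W - y) = j + 1 - W by omega]
          exact List.getElem?_eq_getElem hj2
  -- the Lyndon rotation of w
  obtain ⟨r, hrW, hlyr⟩ := GTS_exists_lyndon_rotation lt hasym htri htr w hwne hwprim
  rw [← hW] at hrW
  have hlamlen : (w.rotate r).length = W := by simp [hW]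
  have hqwin : ∀ k < W, s[t + r + k]? = (w.rotate r)[k]? := by
    intro k hk
    have e1 := hsw (r + k) (by omega)
    rw [show t + r + k = t + (r + k) by omega, e1]
    rw [List.rotate_eq_drop_append_take (by omega : r ≤ w.length)]
    rcases Nat.lt_or_ge (r + k) W with h | h
    · rw [GTS_getElem?_left w w (r + k) (by omega),
        GTS_getElem?_left (w.drop r) (w.take r) k (by rw [List.length_drop]; omega),
        List.getElem?_drop]
    · have e2 : (w ++ w)[r + k]? = w[r + k - W]? := by
        have h5 := GTS_getElem?_right w w (r + k - W)
        rw [show w.length + (r + k - W) = r + k by omega] at h5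
        exact h5
      have e3 : (w.drop r ++ w.take r)[k]? = w[r + k - W]? := by
        rw [List.getElem?_append_right (by rw [List.length_drop]; omega),
          List.length_drop, List.getElem?_take, if_pos (by omega),
          show k - (w.length - r) = r + k - W by omega]
      rw [e2, e3]
  have hrj' : t + 2 * W ≤ j + 1 := by omega
  -- case analysis for gu = xu.length
  have hguCase : pu = W ∨ t + r + W ≤ xu.length := by
    rcases Nat.lt_trichotomy xu.length (t + r) with h | h | h
    · exfalso
      have h1 : GTS_SLt lt s xu.length (t + r) :=
        GTS_slt_window lt s xu.length pu (t + r) lu hwinu hlul hluL h (by omega)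
      have h2 : GTS_SLt lt s (t + r) xu.length := by
        refine GTS_slt_sigma lt s (t + r) W xu.length (w.rotate r) hqwin hlamlen hlyr h
          (by omega) ?_
        intro m hm
        rw [show xu.length + W + m = (xu.length + m) + W by omega]
        exact hperW (xu.length + m) (by omega) (by omega)
      exact GTS_slt_asymm lt hirr hasym s _ _ h2 h1
    · left
      rcases Nat.lt_trichotomy pu W with h' | h' | h'
      · omega
      · exact h'
      · exfalso
        have h1 : GTS_SLt lt s (t + r) (t + r + W) := by
          refine GTS_slt_window lt s (t + r) pu (t + r + W) lu ?_ hlul hluL (by omega)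
            (by omega)
          intro k hk
          rw [← h]
          exact hwinu k hk
        have h2 : GTS_SLt lt s (t + r + W) (t + r) := hqC (t + r) (by omega) (by omega)
        exact GTS_slt_asymm lt hirr hasym s _ _ h1 h2
    · rcases Nat.lt_or_ge xu.length (t + r + W) with h' | h'
      · exfalso
        have h1 : GTS_SLt lt s (t + r) xu.length :=
          GTS_slt_window lt s (t + r) W xu.length (w.rotate r) hqwin hlamlen hlyr h h'
        have h2 : GTS_SLt lt s xu.length (t + r) := by
          have h0 := GTS_slt_decomp lt s 0 xu lu hXu
            (by
              intro k hk
              rw [show 0 + xu.length + k = xu.length + k by omega]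
              exact hwinu k (by omega))
            hxu hxune hluL (t + r) (by omega) (by omega)
          rw [Nat.zero_add] at h0
          exact h0
        exact GTS_slt_asymm lt hirr hasym s _ _ h1 h2
      · exact Or.inr h'
  -- case analysis for gv = a + xv.length
  have hgvCase : (a + xv.length = t + r ∧ pv = W) ∨ t + r + W ≤ a + xv.length := by
    rcases Nat.lt_trichotomy (a + xv.length) (t + r) with h | h | h
    · exfalso
      have h1 : GTS_SLt lt s (a + xv.length) (t + r) :=
        GTS_slt_window lt s (a + xv.length) pv (t + r) lv hwinv hlvl hlvL h (by omega)
      have h2 : GTS_SLt lt s (t + r) (a + xv.length) := by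
        refine GTS_slt_sigma lt s (t + r) W (a + xv.length) (w.rotate r) hqwin hlamlen
          hlyr h (by omega) ?_
        intro m hm
        rw [show a + xv.length + W + m = (a + xv.length + m) + W by omega]
        exact hperW (a + xv.length + m) (by omega) (by omega)
      exact GTS_slt_asymm lt hirr hasym s _ _ h2 h1
    · left
      refine ⟨h, ?_⟩
      rcases Nat.lt_trichotomy pv W with h' | h' | h'
      · omega
      · exact h'
      · exfalso
        have h1 : GTS_SLt lt s (t + r) (t + r + W) := by
          refine GTS_slt_window lt s (t + r) pv (t + r + W) lv ?_ hlvl hlvL (by omega)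
            (by omega)
          intro k hk
          rw [← h]
          exact hwinv k hk
        have h2 : GTS_SLt lt s (t + r + W) (t + r) := hqC (t + r) (by omega) (by omega)
        exact GTS_slt_asymm lt hirr hasym s _ _ h1 h2
    · rcases Nat.lt_or_ge (a + xv.length) (t + r + W) with h' | h'
      · exfalso
        have h1 : GTS_SLt lt s (t + r) (a + xv.length) :=
          GTS_slt_window lt s (t + r) W (a + xv.length) (w.rotate r) hqwin hlamlen hlyr h h'
        have h2 : GTS_SLt lt s (a + xv.length) (t + r) :=
          GTS_slt_decomp lt s a xv lv hXv
            (by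
              intro k hk
              exact hwinv k (by omega))
            hxv hxvne hlvL (t + r) (by omega) (by omega)
        exact GTS_slt_asymm lt hirr hasym s _ _ h1 h2
      · exact Or.inr h'
  -- dividing helper for the v-square
  have hWdvdV_of_pv : pv = W → W ∣ V := by
    intro hpvW
    have hgcd : IsPeriodOf (v ++ v) (Nat.gcd V W) :=
      GTS_fine_wilf (V + W) (v ++ v) V W le_rfl hvvV (by rw [← hpvW]; exact hpv.1)
        (by omega)
    have h1 : pv ≤ Nat.gcd V W := hpv.2 _ hgcd
    have h2 : Nat.gcd V W ≤ W := Nat.gcd_le_right _ (by omega)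
    have h3 : Nat.gcd V W = W := by omega
    rw [← h3]
    exact Nat.gcd_dvd_left _ _
  rcases hguCase with hpuW | hguq
  · -- pu = W : everything is W-periodic, conclude by divisibility
    have hWU : W ∣ U := by
      have hgcd : IsPeriodOf s (Nat.gcd U W) :=
        GTS_fine_wilf (U + W) s U W le_rfl hsU (by rw [← hpuW]; exact hpu.1) (by omega)
      have h1 : pu ≤ Nat.gcd U W := hpu.2 _ hgcd
      have h2 : Nat.gcd U W ≤ W := Nat.gcd_le_right _ (by omega)
      have h3 : Nat.gcd U W = W := by omega
      rw [← h3]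
      exact Nat.gcd_dvd_left _ _
    have hvvW : IsPeriodOf (v ++ v) W := by
      refine GTS_period_sub s (v ++ v) a W (by rw [← hpuW]; exact hpu.1) ?_ (by omega)
        (by omega)
      intro k hk
      rw [hvvlen] at hk
      exact (hsv k hk).symm
    have hpvW : pv = W := le_antisymm (hpv.2 _ hvvW) hWpv
    obtain ⟨mu, hmu⟩ := hWU
    obtain ⟨mv, hmv⟩ := hWdvdV_of_pv hpvW
    have hmuv : mv < mu := by
      by_contra hcon
      push_neg at hcon
      have := Nat.mul_le_mul_left W hcon
      omega
    calc V + W = W * (mv + 1) := by rw [hmv]; ring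
      _ ≤ W * mu := Nat.mul_le_mul_left W (by omega)
      _ = U := hmu.symm
  · -- q + W ≤ gu
    have hqWU : t + r + W ≤ U := by omega
    have hqWaV : t + r + W ≤ a + V := by
      rcases hgvCase with ⟨hgvq, hpvW⟩ | hgvq
      · obtain ⟨mv, hmv⟩ := hWdvdV_of_pv hpvW
        have h2W : 2 * W ≤ V := by
          have hmv2 : 2 ≤ mv := by
            by_contra hcon
            push_neg at hcon
            interval_cases mv <;> omega
          calc 2 * W = W * 2 := by ring
            _ ≤ W * mv := Nat.mul_le_mul_left W hmv2
            _ = V := hmv.symm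
        omega
      · omega
    by_contra hcon
    push_neg at hcon
    have hUVW : U < V + W := hcon
    have hd1 : 1 ≤ U - V := by omega
    have hdW : U - V < W := by omega
    have hOccV : ∀ k < W, s[t + r + V + k]? = s[t + r + k]? := by
      intro k hk
      have e1 := hsv (t + r + k - a) (by omega)
      rw [show a + (t + r + k - a) = t + r + k by omega] at e1
      have e2 := hsv (t + r + k - a + V) (by omega)
      rw [show a + (t + r + k - a + V) = t + r + V + k by omega] at e2
      have e3 : (v ++ v)[t + r + k - a]? = v[t + r + k - a]? :=
        GTS_getElem?_left v v _ (by omega)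
      have e4 : (v ++ v)[t + r + k - a + V]? = v[t + r + k - a]? := by
        rw [show t + r + k - a + V = v.length + (t + r + k - a) by omega]
        exact GTS_getElem?_right v v _
      rw [e2, e4, e1, e3]
    have hOccU : ∀ k < W, s[t + r + U + k]? = s[t + r + k]? := by
      intro k hk
      have e1 : s[t + r + k]? = u[t + r + k]? := by
        rw [hs]
        exact GTS_getElem?_left u u _ (by omega)
      have e2 : s[t + r + U + k]? = u[t + r + k]? := by
        rw [hs, show t + r + U + k = u.length + (t + r + k) by omega]
        exact GTS_getElem?_right u u _
      rw [e1, e2]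
    have hperlam : ∀ k < W - (U - V), (w.rotate r)[(U - V) + k]? = (w.rotate r)[k]? := by
      intro k hk
      have e1 := hqwin k (by omega)
      have e2 := hqwin ((U - V) + k) (by omega)
      have e3 := hOccU k (by omega)
      have e4 := hOccV ((U - V) + k) (by omega)
      rw [show t + r + U + k = t + r + V + (U - V + k) by omega] at e3
      rw [e4] at e3
      rw [e1, e2] at e3
      exact e3
    have hσeq : (w.rotate r).drop (U - V) = (w.rotate r).take (W - (U - V)) := by
      apply List.ext_getElem?
      intro k
      rcases Nat.lt_or_ge k (W - (U - V)) with h | h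
      · rw [List.getElem?_drop, List.getElem?_take, if_pos h]
        exact hperlam k h
      · rw [List.getElem?_drop, List.getElem?_take, if_neg (by omega),
          List.getElem?_eq_none (by rw [hlamlen]; omega)]
    have hdroplen : ((w.rotate r).drop (U - V)).length = W - (U - V) := by
      rw [List.length_drop, hlamlen]
    have hlexa : List.Lex lt (w.rotate r) ((w.rotate r).drop (U - V)) := by
      refine hlyr.2 _ (List.drop_suffix _ _) ?_ ?_
      · intro h0
        have h1 := congrArg List.length h0
        rw [hdroplen] at h1
        simp at h1
        omega
      · intro h0
        have h1 := congrArg List.length h0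
        rw [hdroplen, hlamlen] at h1
        omega
    have hlexb : List.Lex lt ((w.rotate r).drop (U - V)) (w.rotate r) := by
      refine GTS_lex_of_prefix_ne lt ?_ ?_
      · rw [hσeq]
        exact List.take_prefix _ _
      · intro h0
        have h1 := congrArg List.length h0
        rw [hdroplen, hlamlen] at h1
        omega
    exact GTS_lex_asymm lt hasym hlexa hlexb
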